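/- Let G be a finite simple 3-regular graph on vertex set {1,…,n} with m = 3n/2 edges, let c be a positive integer, let f_c be the associated regression objective, and set m' = m + c·n. Let η ∈ (0,1) satisfy 1 − η − 12/c ≥ 0, and let δ ≥ 0 satisfy δ ≤ 8·(1 − η − 12/c)/(2 + 6c). If there exists z ∈ ℝ^n with f_c(z) ≤ δ·m', then MAXCUT(G) ≥ η·m. -/
import Mathlib


open Classical Finset

/-- The regression objective `f_c(z) = Σ_{{u,v}∈E} (z_u + z_v)² + c·Σ_j (|z_j| − 1)²`
associated to a finite simple graph `G` and a positive integer `c`; it equals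
`‖ |Wz| − y ‖₂²` for the corresponding ℓ₂-regression-with-hidden-signs instance
(which has `m' = m + c·n` rows). -/
noncomputable def fObj {n : ℕ} (G : SimpleGraph (Fin n)) [Fintype G.edgeSet] (c : ℕ)
    (z : Fin n → ℝ) : ℝ :=
  (∑ e ∈ G.edgeFinset, Sym2.lift ⟨fun u v => (z u + z v) ^ 2, fun u v => by ring⟩ e)
    + c * ∑ j : Fin n, (|z j| - 1) ^ 2

/-- `cutCard G S` is the number of edges of `G` with exactly one endpoint in `S`. -/
noncomputable def cutCard {n : ℕ} (G : SimpleGraph (Fin n)) [Fintype G.edgeSet]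
    (S : Finset (Fin n)) : ℕ :=
  (G.edgeFinset.filter
    (fun e => Sym2.lift ⟨fun u v => ((u ∈ S) ≠ (v ∈ S)), fun u v => propext ne_comm⟩ e)).card

/-- `maxCut G` is the maximum of `cutCard G S` over all vertex subsets `S`. -/
noncomputable def maxCut {n : ℕ} (G : SimpleGraph (Fin n)) [Fintype G.edgeSet] : ℕ :=
  Finset.univ.sup (fun S : Finset (Fin n) => cutCard G S)

/-- Pointwise key inequality: if `a` and `b` have the same sign (as per positivity),
then `(a+b)²` is at least `2` minus twice the calibration error. -/
lemma fObj_keyA (a b : ℝ) (hab : 0 < a ↔ 0 < b) :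
    2 - 2 * ((|a| - 1) ^ 2 + (|b| - 1) ^ 2) ≤ (a + b) ^ 2 := by
  by_cases h : 0 < a
  · have hb := hab.mp h
    rw [abs_of_pos h, abs_of_pos hb]
    nlinarith [sq_nonneg (a + b - 1), sq_nonneg (a - b)]
  · have hb : ¬ 0 < b := fun h' => h (hab.mpr h')
    push_neg at h hb
    rw [abs_of_nonpos h, abs_of_nonpos hb]
    nlinarith [sq_nonneg (a + b + 1), sq_nonneg (a - b)]

/-- The arithmetic core of the soundness argument. -/
lemma fObj_keyArith (c m nn K η δ : ℝ) (hc : 1 ≤ c) (h2m : 2 * m = 3 * nn)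
    (hm0 : 0 ≤ m) (hη0 : 0 < η) (hη1 : η < 1)
    (hηc : 0 ≤ 1 - η - 12 / c) (hδ0 : 0 ≤ δ)
    (hδ : δ ≤ 8 * (1 - η - 12 / c) / (2 + 6 * c))
    (hK : 2 * (m - K) ≤ δ * (m + c * nn) + 6 * (δ * (m + c * nn) / c)) :
    η * m ≤ K := by
  have hc0 : (0:ℝ) < c := lt_of_lt_of_le one_pos hc
  set t := 1 - η with ht
  have h12 : 12 ≤ t * c := by
    have h1 : 12 / c ≤ t := by linarith
    have h2 := mul_le_mul_of_nonneg_right h1 hc0.le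
    rwa [div_mul_cancel₀ _ hc0.ne'] at h2
  have ht1 : t ≤ 1 := by rw [ht]; linarith
  have ht0 : 0 < t := by rw [ht]; linarith
  have hA : δ * (2 + 6 * c) ≤ 8 * (t - 12 / c) := (le_div_iff₀ (by linarith)).mp hδ
  have hB : δ * (2 + 6 * c) * c ≤ 8 * (t * c) - 96 := by
    have h2 := mul_le_mul_of_nonneg_right hA hc0.le
    have h3 : 8 * (t - 12 / c) * c = 8 * (t * c) - 96 := by field_simp; ring
    exact h2.trans_eq h3
  have hKc : 2 * c * (m - K) ≤ δ * (m + c * nn) * c + 6 * (δ * (m + c * nn)) := by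
    have h2 := mul_le_mul_of_nonneg_right hK hc0.le
    have h3 : (δ * (m + c * nn) / c) * c = δ * (m + c * nn) := by
      field_simp
    nlinarith [h2, h3]
  have hM3 : 3 * (m + c * nn) = m * (3 + 2 * c) := by linear_combination (-c) * h2m
  have hKc' : 6 * c * (m - K) ≤ δ * (m * (3 + 2 * c)) * (c + 6) := by nlinarith [hKc, hM3]
  have hX : 0 ≤ m * (3 + 2 * c) * (c + 6) := by positivity
  have hC := mul_le_mul_of_nonneg_right hB hX
  have hP : (0:ℝ) < (2 + 6 * c) * c := by positivity
  have hD : 6 * c * (m - K) * ((2 + 6 * c) * c)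
      ≤ (8 * (t * c) - 96) * (m * (3 + 2 * c) * (c + 6)) := by
    calc 6 * c * (m - K) * ((2 + 6 * c) * c)
        ≤ δ * (m * (3 + 2 * c)) * (c + 6) * ((2 + 6 * c) * c) :=
          mul_le_mul_of_nonneg_right hKc' hP.le
      _ = δ * (2 + 6 * c) * c * (m * (3 + 2 * c) * (c + 6)) := by ring
      _ ≤ (8 * (t * c) - 96) * (m * (3 + 2 * c) * (c + 6)) := hC
  have hE : (8 * (t * c) - 96) * (m * (3 + 2 * c) * (c + 6))
      ≤ 6 * (t * c) * m * ((2 + 6 * c) * c) := by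
    nlinarith [mul_nonneg (mul_nonneg hm0 (by linarith : (0:ℝ) ≤ t * c - 12)) (mul_pos hc0 hc0).le,
      mul_nonneg (mul_nonneg hm0 (by linarith : (0:ℝ) ≤ 1 - t)) (mul_pos hc0 hc0).le,
      mul_nonneg (mul_nonneg hm0 (by linarith : (0:ℝ) ≤ 1 - t)) hc0.le,
      mul_nonneg hm0 hc0.le, mul_nonneg hm0 (mul_pos hc0 hc0).le, hm0]
  have hF : 6 * c * (m - K) ≤ 6 * (t * c) * m :=
    le_of_mul_le_mul_right (by linarith [hD, hE]) hP
  have hG : m - K ≤ t * m := by nlinarith [hF, hc0]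
  have : η * m = m - t * m := by rw [ht]; ring
  linarith

/-- Weighted handshake identity for a 3-regular graph. -/
lemma fObj_rsum {n : ℕ} (G : SimpleGraph (Fin n)) [DecidableRel G.Adj]
    (h : Fin n → ℝ) (hreg : ∀ v, G.degree v = 3) :
    ∑ e ∈ G.edgeFinset, Sym2.lift ⟨fun u v => h u + h v, fun u v => add_comm _ _⟩ e
      = 3 * ∑ j, h j := by
  classical
  have step1 : ∀ e ∈ G.edgeFinset,
      Sym2.lift ⟨fun u v => h u + h v, fun u v => add_comm _ _⟩ e
        = ∑ v, if v ∈ e then h v else 0 := by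
    intro e he
    induction e with
    | _ a b =>
      have hab : a ≠ b := G.ne_of_adj (G.mem_edgeSet.mp (SimpleGraph.mem_edgeFinset.mp he))
      simp only [Sym2.lift_mk, Sym2.mem_iff]
      rw [← Finset.sum_filter]
      have hfe : univ.filter (fun v => v = a ∨ v = b) = {a, b} := by
        ext v; simp
      rw [hfe, Finset.sum_pair hab]
  calc ∑ e ∈ G.edgeFinset, Sym2.lift ⟨fun u v => h u + h v, fun u v => add_comm _ _⟩ e
      = ∑ e ∈ G.edgeFinset, ∑ v, if v ∈ e then h v else 0 := Finset.sum_congr rfl step1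
    _ = ∑ v, ∑ e ∈ G.edgeFinset, if v ∈ e then h v else 0 := Finset.sum_comm
    _ = ∑ v, (G.degree v : ℝ) * h v := by
        refine Finset.sum_congr rfl fun v _ => ?_
        rw [← Finset.sum_filter, Finset.sum_const, ← SimpleGraph.incidenceFinset_eq_filter,
          SimpleGraph.card_incidenceFinset_eq_degree, nsmul_eq_mul]
    _ = 3 * ∑ j, h j := by
        rw [Finset.mul_sum]
        exact Finset.sum_congr rfl fun v _ => by rw [hreg v]; norm_num

set_option maxHeartbeats 2000000 in
/-- Soundness of the MAX-CUT reduction: for a 3-regular graph `G` with `m = 3n/2` edges and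
`m' = m + c·n`, if `η ∈ (0,1)` satisfies `1 − η − 12/c ≥ 0` and `0 ≤ δ ≤ 8(1 − η − 12/c)/(2+6c)`,
and some `z` achieves `f_c(z) ≤ δ·m'`, then `MAXCUT(G) ≥ η·m`. -/
theorem fObj_soundness {n : ℕ} (G : SimpleGraph (Fin n)) [DecidableRel G.Adj]
    (hreg : ∀ v, G.degree v = 3) (hm : 2 * G.edgeFinset.card = 3 * n)
    (c : ℕ) (hc : 0 < c) (η δ : ℝ) (hη : η ∈ Set.Ioo (0 : ℝ) 1)
    (hηc : 0 ≤ 1 - η - 12 / c) (hδ0 : 0 ≤ δ)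
    (hδ : δ ≤ 8 * (1 - η - 12 / c) / (2 + 6 * c))
    (hz : ∃ z : Fin n → ℝ, fObj G c z ≤ δ * ((G.edgeFinset.card : ℝ) + c * n)) :
    η * G.edgeFinset.card ≤ maxCut G := by
  obtain ⟨z, hz⟩ := hz
  have hc0 : (0:ℝ) < c := by exact_mod_cast hc
  set S : Finset (Fin n) := univ.filter (fun j => 0 < z j) with hSdef
  set h : Fin n → ℝ := fun j => (|z j| - 1) ^ 2 with hhdef
  set H : ℝ := ∑ j, h j with hHdef
  have hH0 : 0 ≤ H := Finset.sum_nonneg fun j _ => sq_nonneg _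
  set q : Sym2 (Fin n) → ℝ :=
    Sym2.lift ⟨fun u v => (z u + z v) ^ 2, fun u v => by ring⟩ with hqdef
  set P : Sym2 (Fin n) → Prop :=
    Sym2.lift ⟨fun u v => ((u ∈ S) ≠ (v ∈ S)), fun u v => propext ne_comm⟩ with hPdef
  set r : Sym2 (Fin n) → ℝ :=
    Sym2.lift ⟨fun u v => h u + h v, fun u v => add_comm _ _⟩ with hrdef
  set E := G.edgeFinset with hEdef
  set m : ℝ := (E.card : ℝ) with hmdef
  set M : ℝ := m + c * n with hMdef
  have hfz : ∑ e ∈ E, q e + c * H ≤ δ * M := hz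
  -- nonnegativity of q and r
  have hq0 : ∀ e, 0 ≤ q e := by
    intro e
    induction e with
    | _ a b => simp only [hqdef, Sym2.lift_mk]; positivity
  have hr0 : ∀ e, 0 ≤ r e := by
    intro e
    induction e with
    | _ a b =>
      simp only [hrdef, Sym2.lift_mk, hhdef]
      positivity
  -- key pointwise inequality on uncut edges
  have hkey : ∀ e ∈ E, ¬ P e → 2 - 2 * r e ≤ q e := by
    intro e _ hPe
    induction e with
    | _ a b =>
      simp only [hPdef, Sym2.lift_mk, ne_eq, not_not] at hPe
      have hab : 0 < z a ↔ 0 < z b := by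
        constructor
        · intro ha
          have : a ∈ S := by simp [hSdef, ha]
          rw [hPe] at this
          simpa [hSdef] using this
        · intro hb
          have : b ∈ S := by simp [hSdef, hb]
          rw [← hPe] at this
          simpa [hSdef] using this
      simpa only [hqdef, hrdef, hhdef, Sym2.lift_mk] using fObj_keyA (z a) (z b) hab
  -- handshake
  have hrsum : ∑ e ∈ E, r e = 3 * H := fObj_rsum G h hreg
  -- cut cardinality
  set K : ℕ := cutCard G S with hKdef
  have hsplit : ((E.filter P).card : ℕ) + (E.filter (fun e => ¬ P e)).card = E.card :=
    Finset.card_filter_add_card_filter_not (p := P)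
  have hKeq : (E.filter P).card = K := by
    rw [hKdef, cutCard]
  -- lower bound for the edge sum
  have hEsum : 2 * ((E.filter (fun e => ¬ P e)).card : ℝ) - 2 * (3 * H) ≤ ∑ e ∈ E, q e := by
    have h1 : ∑ e ∈ E.filter (fun e => ¬ P e), (2 - 2 * r e) ≤
        ∑ e ∈ E.filter (fun e => ¬ P e), q e := by
      refine Finset.sum_le_sum fun e he => ?_
      obtain ⟨heE, hPe⟩ := Finset.mem_filter.mp he
      exact hkey e heE hPe
    have h2 : ∑ e ∈ E.filter (fun e => ¬ P e), (2 - 2 * r e)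
        = 2 * ((E.filter (fun e => ¬ P e)).card : ℝ)
          - 2 * ∑ e ∈ E.filter (fun e => ¬ P e), r e := by
      rw [Finset.sum_sub_distrib, Finset.sum_const, ← Finset.mul_sum]
      push_cast
      ring
    have h3 : ∑ e ∈ E.filter (fun e => ¬ P e), r e ≤ ∑ e ∈ E, r e :=
      Finset.sum_le_sum_of_subset_of_nonneg (Finset.filter_subset _ _)
        (fun e _ _ => hr0 e)
    have h4 : ∑ e ∈ E.filter (fun e => ¬ P e), q e ≤ ∑ e ∈ E, q e :=
      Finset.sum_le_sum_of_subset_of_nonneg (Finset.filter_subset _ _)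
        (fun e _ _ => hq0 e)
    rw [← hrsum]
    linarith
  -- assemble
  have hq_total_0 : 0 ≤ ∑ e ∈ E, q e := Finset.sum_nonneg fun e _ => hq0 e
  have hcH : (c : ℝ) * H ≤ δ * M := by linarith
  have hHle : H ≤ δ * M / c := by
    rw [le_div_iff₀ hc0]
    linarith [hcH]
  have hcard : ((E.filter (fun e => ¬ P e)).card : ℝ) = m - K := by
    have := hsplit
    rw [hKeq] at this
    have : ((E.filter (fun e => ¬ P e)).card : ℝ) = (E.card : ℝ) - K := by
      have h5 : (K : ℝ) + ((E.filter (fun e => ¬ P e)).card : ℝ) = (E.card : ℝ) := by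
        exact_mod_cast this
      linarith
    rw [this]
  have hKineq : 2 * (m - (K : ℝ)) ≤ δ * M + 6 * (δ * M / c) := by
    rw [← hcard]
    have : 2 * ((E.filter (fun e => ¬ P e)).card : ℝ) ≤ δ * M - c * H + 6 * H := by
      linarith [hEsum, hfz]
    have h6 : (1 : ℝ) ≤ c := by exact_mod_cast hc
    nlinarith [hHle, hH0]
  have hmain : η * m ≤ (K : ℝ) := by
    have h2m : 2 * m = 3 * (n : ℝ) := by
      rw [hmdef]
      exact_mod_cast hm
    have hm0 : (0:ℝ) ≤ m := by rw [hmdef]; positivity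
    have hc1 : (1:ℝ) ≤ (c:ℝ) := by exact_mod_cast hc
    have hK' : 2 * (m - (K:ℝ)) ≤ δ * (m + c * n) + 6 * (δ * (m + c * n) / c) := by
      rw [← hMdef]; exact hKineq
    exact fObj_keyArith (c:ℝ) m (n:ℝ) (K:ℝ) η δ hc1 h2m hm0 hη.1 hη.2 hηc hδ0 hδ hK'
  have hKmax : K ≤ maxCut G := by
    rw [hKdef, maxCut]
    exact Finset.le_sup (f := fun T => cutCard G T) (Finset.mem_univ S)
  have hKmax' : (K : ℝ) ≤ (maxCut G : ℝ) := by exact_mod_cast hKmax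
  exact hmain.trans hKmax'
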